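/- For any report profile θ', the expected revenue of PDA over the uniformly random order equals the seller's Shapley contribution minus the expected welfare loss from unsold items: E_PDA(Rev(θ')) = φ_s(θ') − (1/|O(V)|) · Σ_{o ∈ O(V)} (SW*(θ', V, π^o) − SW(θ', π^o)), where π^o is the final allocation produced by PDA under order o. -/

import Mathlib

namespace DA

open scoped Classical

/-- A report profile for selling `k` homogeneous items: each agent reports a
valuation over quantities `0, …, k` and a set of neighbors. -/
structure Profile (V : Type*) (k : ℕ) where
  val : V → ℕ → ℝ
  nbr : V → Set V

/-- A valuation is valid if it is normalized (`v 0 = 0`) and has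
non-increasing marginals on `{0, …, k}`. -/
def ValidVal (k : ℕ) (v : ℕ → ℝ) : Prop :=
  v 0 = 0 ∧ ∀ q : ℕ, q + 2 ≤ k → v (q + 2) - v (q + 1) ≤ v (q + 1) - v q

variable {V : Type*}

/-- A profile is valid (w.r.t. seller `s`) if every buyer's valuation is valid. -/
def Profile.Valid {k : ℕ} (θ : Profile V k) (s : V) : Prop :=
  ∀ i : V, i ≠ s → ValidVal k (θ.val i)

/-- The reported (undirected) adjacency: `{i, j}` is an edge whenever
`j ∈ r'_i` (or symmetrically `i ∈ r'_j`). -/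
def Profile.adj {k : ℕ} (θ : Profile V k) (i j : V) : Prop :=
  j ∈ θ.nbr i ∨ i ∈ θ.nbr j

/-- The feasible set `F(θ', B)` of a coalition `B`: the buyers in `B` that are
connected to the seller `s` by a path of reported edges lying inside `B`
(empty if `s ∉ B`). -/
def Profile.feasible {k : ℕ} (θ : Profile V k) (s : V) (B : Set V) : Set V :=
  {i | i ≠ s ∧ i ∈ B ∧ s ∈ B ∧
    Relation.ReflTransGen (fun a b => θ.adj a b ∧ a ∈ B ∧ b ∈ B) s i}

/-- Updating agent `i`'s report in a profile. -/
def updateAgent [DecidableEq V] {k : ℕ} (θ : Profile V k) (i : V)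
    (v : ℕ → ℝ) (r : Set V) : Profile V k :=
  ⟨Function.update θ.val i v, Function.update θ.nbr i r⟩

/-- The profile `θ'_B` obtained by removing (setting to nil) the reports of
all agents outside the coalition `B`. -/
noncomputable def Profile.restrict {k : ℕ} (θ : Profile V k) (B : Set V) : Profile V k :=
  ⟨fun i q => if i ∈ B then θ.val i q else 0,
   fun i => if i ∈ B then θ.nbr i ∩ B else ∅⟩

section Homogeneous

variable [Fintype V] [DecidableEq V]

/-- Social welfare of an allocation `π` under reports `θ`. -/
def SW {k : ℕ} (θ : Profile V k) (s : V) (π : V → ℕ) : ℝ :=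
  ∑ i ∈ Finset.univ.erase s, θ.val i (π i)

/-- The allocations admissible for a coalition `B` with irrevocable prior
allocation `πhat`: at most `k` items in total are allocated (none to the
seller), only buyers in `F(θ, B)` receive items, and nobody receives fewer
items than in `πhat`. -/
def feasAllocs {k : ℕ} (θ : Profile V k) (s : V) (B : Set V) (πhat : V → ℕ) :
    Set (V → ℕ) :=
  {π | π s = 0 ∧ (∑ i ∈ Finset.univ.erase s, π i) ≤ k ∧
    (∀ i, i ∉ θ.feasible s B → π i = 0) ∧ ∀ j, j ≠ s → πhat j ≤ π j}

/-- `SW*(θ, B, πhat)`: the maximum social welfare over the admissible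
allocations for coalition `B` with prior allocation `πhat`. -/
noncomputable def SWstar {k : ℕ} (θ : Profile V k) (s : V) (B : Set V)
    (πhat : V → ℕ) : ℝ :=
  sSup (SW θ s '' feasAllocs θ s B πhat)

/-- A chosen allocation attaining `SW*(θ, B, πhat)`. -/
noncomputable def bestAlloc {k : ℕ} (θ : Profile V k) (s : V) (B : Set V)
    (πhat : V → ℕ) : V → ℕ :=
  Classical.epsilon fun π =>
    π ∈ feasAllocs θ s B πhat ∧ SW θ s π = SWstar θ s B πhat

/-- `o_{≺i}`: the set of agents strictly preceding `i` in the order `o`. -/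
def pred (o : V ≃ Fin (Fintype.card V)) (i : V) : Set V := {j | o j < o i}

/-- `o_{≼i} = o_{≺i} ∪ {i}`. -/
def predeq (o : V ≃ Fin (Fintype.card V)) (i : V) : Set V := {j | o j ≤ o i}

/-- The partial allocation produced by PDA after the first `t` agents of the
order `o` have been traversed: the seller is skipped, and each traversed buyer
`i` receives her share in a chosen allocation attaining
`SW*(θ, o_{≼i}, π^{o≺i})`, earlier allocations being irrevocable. -/
noncomputable def pdaStep {k : ℕ} (θ : Profile V k) (s : V)
    (o : V ≃ Fin (Fintype.card V)) : ℕ → V → ℕ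
  | 0 => fun _ => 0
  | t + 1 =>
    if h : t < Fintype.card V then
      let i := o.symm ⟨t, h⟩
      if i = s then pdaStep θ s o t
      else Function.update (pdaStep θ s o t) i
        (bestAlloc θ s (predeq o i) (pdaStep θ s o t) i)
    else pdaStep θ s o t

/-- `π^{o≺i}`: the allocation fixed by PDA right before agent `i` is traversed. -/
noncomputable def pdaPrior {k : ℕ} (θ : Profile V k) (s : V)
    (o : V ≃ Fin (Fintype.card V)) (i : V) : V → ℕ :=
  pdaStep θ s o (o i : ℕ)

/-- The final allocation `π^o` produced by PDA under the order `o`. -/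
noncomputable def pdaAlloc {k : ℕ} (θ : Profile V k) (s : V)
    (o : V ≃ Fin (Fintype.card V)) : V → ℕ :=
  pdaStep θ s o (Fintype.card V)

/-- The payment charged by PDA to agent `i` under the order `o`:
`p_i = SW*(θ, o_{≺i}, π^{o≺i}) − SW*(θ, o_{≼i}, π^{o≺i}) + v'_i(π_i)`, except
that agents traversed after all `k` items have been allocated pay `0`
(and the seller pays nothing). -/
noncomputable def pdaPay {k : ℕ} (θ : Profile V k) (s : V)
    (o : V ≃ Fin (Fintype.card V)) (i : V) : ℝ :=
  if i = s then 0
  else if (∑ j ∈ Finset.univ.erase s, pdaPrior θ s o i j) = k then 0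
  else SWstar θ s (pred o i) (pdaPrior θ s o i)
    - SWstar θ s (predeq o i) (pdaPrior θ s o i)
    + θ.val i (pdaAlloc θ s o i)

/-- `u_i^o`: the utility of buyer `i` with true valuation `v` under order `o`. -/
noncomputable def pdaUtil {k : ℕ} (v : ℕ → ℝ) (θ : Profile V k) (s : V)
    (o : V ≃ Fin (Fintype.card V)) (i : V) : ℝ :=
  v (pdaAlloc θ s o i) - pdaPay θ s o i

/-- `E_PDA(u_i)`: buyer `i`'s expected utility over the uniformly random order. -/
noncomputable def pdaExpUtil {k : ℕ} (v : ℕ → ℝ) (θ : Profile V k) (s : V)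
    (i : V) : ℝ :=
  (∑ o : V ≃ Fin (Fintype.card V), pdaUtil v θ s o i) /
    ((Fintype.card V).factorial : ℝ)

/-- `μ(θ)`: the fraction of orders for which PDA terminates with no item sold. -/
noncomputable def mu {k : ℕ} (θ : Profile V k) (s : V) : ℝ :=
  (Nat.card {o : V ≃ Fin (Fintype.card V) // ∀ j, pdaAlloc θ s o j = 0} : ℝ) /
    ((Fintype.card V).factorial : ℝ)

/-- The Shapley contribution `φ_i(θ)` of agent `i`. -/
noncomputable def shapley {k : ℕ} (θ : Profile V k) (s : V) (i : V) : ℝ :=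
  ∑ B ∈ (Finset.univ.erase i).powerset,
    ((B.card.factorial * (Fintype.card V - B.card - 1).factorial : ℝ) /
      ((Fintype.card V).factorial : ℝ)) *
    (SWstar θ s (↑(insert i B)) 0 - SWstar θ s (↑B) 0)

end Homogeneous

end DA

section AuxPDA
set_option linter.unusedSectionVars false
set_option maxHeartbeats 1000000

namespace DA
open scoped Classical
variable {V : Type*} [Fintype V] [DecidableEq V] {k : ℕ}

lemma feasAllocs_finite (θ : Profile V k) (s : V) (B : Set V) (πhat : V → ℕ) :
    (feasAllocs θ s B πhat).Finite := by
  have : feasAllocs θ s B πhat ⊆ Set.pi Set.univ (fun _ : V => Set.Iic k) := by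
    intro π hπ i _
    obtain ⟨hs, hsum, -, -⟩ := hπ
    by_cases hi : i = s
    · simp [hi, hs]
    · exact le_trans (Finset.single_le_sum (fun j _ => Nat.zero_le _)
        (Finset.mem_erase.2 ⟨hi, Finset.mem_univ i⟩)) hsum
  exact Set.Finite.subset (Set.Finite.pi (fun _ => Set.finite_Iic k)) this

lemma le_SWstar (θ : Profile V k) (s : V) {B : Set V} {πhat π : V → ℕ}
    (h : π ∈ feasAllocs θ s B πhat) : SW θ s π ≤ SWstar θ s B πhat :=
  le_csSup ((feasAllocs_finite θ s B πhat).image _).bddAbove ⟨π, h, rfl⟩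

lemma bestAlloc_spec (θ : Profile V k) (s : V) {B : Set V} {πhat : V → ℕ}
    (h : (feasAllocs θ s B πhat).Nonempty) :
    bestAlloc θ s B πhat ∈ feasAllocs θ s B πhat ∧
      SW θ s (bestAlloc θ s B πhat) = SWstar θ s B πhat := by
  have himg : (SW θ s '' feasAllocs θ s B πhat).Finite :=
    (feasAllocs_finite θ s B πhat).image _
  have hne : (SW θ s '' feasAllocs θ s B πhat).Nonempty := h.image _
  obtain ⟨π, hπ, hsw⟩ := hne.csSup_mem himg
  exact Classical.epsilon_spec (p := fun π =>
    π ∈ feasAllocs θ s B πhat ∧ SW θ s π = SWstar θ s B πhat) ⟨π, hπ, hsw⟩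

lemma SWstar_le (θ : Profile V k) (s : V) {B : Set V} {πhat : V → ℕ}
    (h : (feasAllocs θ s B πhat).Nonempty) {a : ℝ}
    (ha : ∀ π ∈ feasAllocs θ s B πhat, SW θ s π ≤ a) : SWstar θ s B πhat ≤ a := by
  refine csSup_le (h.image _) ?_
  rintro x ⟨π, hπ, rfl⟩; exact ha π hπ

lemma feasible_mono (θ : Profile V k) (s : V) {B B' : Set V} (h : B ⊆ B') :
    θ.feasible s B ⊆ θ.feasible s B' := by
  rintro i ⟨hi, hiB, hsB, hpath⟩
  exact ⟨hi, h hiB, h hsB, Relation.ReflTransGen.mono (fun a b ⟨hadj, ha, hb⟩ => ⟨hadj, h ha, h hb⟩) s i hpath⟩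

lemma feasAllocs_mono (θ : Profile V k) (s : V) {B B' : Set V} (h : B ⊆ B')
    (πhat : V → ℕ) : feasAllocs θ s B πhat ⊆ feasAllocs θ s B' πhat := by
  rintro π ⟨h1, h2, h3, h4⟩
  exact ⟨h1, h2, fun i hi => h3 i (fun hmem => hi (feasible_mono θ s h hmem)), h4⟩

lemma SW_eq_zero {θ : Profile V k} {s : V} (hθ : θ.Valid s) {π : V → ℕ}
    (h : ∀ j, j ≠ s → π j = 0) : SW θ s π = 0 := by
  refine Finset.sum_eq_zero fun i hi => ?_
  have hi' : i ≠ s := (Finset.mem_erase.1 hi).1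
  rw [h i hi', (hθ i hi').1]

lemma feasible_of_not_mem (θ : Profile V k) {s : V} {B : Set V} (h : s ∉ B) :
    θ.feasible s B = ∅ := by
  ext i; simp only [Profile.feasible, Set.mem_setOf_eq, Set.mem_empty_iff_false, iff_false]
  rintro ⟨-, -, hs, -⟩; exact h hs

lemma feasAllocs_zero_of_not_mem (θ : Profile V k) {s : V} {B : Set V} (h : s ∉ B) :
    feasAllocs θ s B (fun _ => 0) = {fun _ => 0} := by
  ext π
  constructor
  · rintro ⟨-, -, h3, -⟩
    funext j
    exact h3 j (by rw [feasible_of_not_mem θ h]; exact id)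
  · rintro rfl
    exact ⟨rfl, by simp, fun _ _ => rfl, fun _ _ => le_refl _⟩

lemma SWstar_zero_of_not_mem {θ : Profile V k} {s : V} (hθ : θ.Valid s) {B : Set V}
    (h : s ∉ B) : SWstar θ s B (fun _ => 0) = 0 := by
  rw [SWstar, feasAllocs_zero_of_not_mem θ h, Set.image_singleton, csSup_singleton]
  exact SW_eq_zero hθ (fun _ _ => rfl)

lemma bestAlloc_zero_of_not_mem (θ : Profile V k) {s : V} {B : Set V} (h : s ∉ B) :
    bestAlloc θ s B (fun _ => 0) = fun _ => 0 := by
  have := (bestAlloc_spec θ s (B := B) (πhat := fun _ => 0)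
    (by rw [feasAllocs_zero_of_not_mem θ h]; exact ⟨_, rfl⟩)).1
  rwa [feasAllocs_zero_of_not_mem θ h, Set.mem_singleton_iff] at this

end DA

namespace DA
open scoped Classical
variable {V : Type*} [Fintype V] [DecidableEq V] {k : ℕ}

/-- Self-admissibility: `π ∈ feasAllocs θ s B π`. -/
def SelfAdm (θ : Profile V k) (s : V) (B : Set V) (π : V → ℕ) : Prop :=
  π ∈ feasAllocs θ s B π

/-- `bestAlloc` dominates the prior pointwise. -/
lemma prior_le_bestAlloc {θ : Profile V k} {s : V} {B : Set V} {π : V → ℕ}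
    (h : SelfAdm θ s B π) : ∀ j, π j ≤ bestAlloc θ s B π j := by
  intro j
  obtain ⟨hmem, -⟩ := bestAlloc_spec θ s (B := B) (πhat := π) ⟨π, h⟩
  by_cases hj : j = s
  · subst hj; rw [h.1, hmem.1]
  · exact hmem.2.2.2 j hj

/-- Key update lemma: fixing buyer `i`'s share at its `bestAlloc` value does not
change `SWstar`. -/
lemma SWstar_update (θ : Profile V k) (s : V) {B : Set V} {π : V → ℕ}
    (h : SelfAdm θ s B π) (i : V) (hi : i ≠ s) :
    SWstar θ s B (Function.update π i (bestAlloc θ s B π i)) = SWstar θ s B π := by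
  set β := bestAlloc θ s B π with hβ
  obtain ⟨hmem, hval⟩ := bestAlloc_spec θ s (B := B) (πhat := π) ⟨π, h⟩
  have hle : ∀ j, π j ≤ β j := prior_le_bestAlloc h
  have hβmem : β ∈ feasAllocs θ s B (Function.update π i (β i)) := by
    refine ⟨hmem.1, hmem.2.1, hmem.2.2.1, fun j hj => ?_⟩
    by_cases hji : j = i
    · subst hji; rw [Function.update_self]
    · rw [Function.update_of_ne hji]; exact hle j
  have hsub : feasAllocs θ s B (Function.update π i (β i)) ⊆ feasAllocs θ s B π := by
    rintro m ⟨h1, h2, h3, h4⟩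
    refine ⟨h1, h2, h3, fun j hj => le_trans ?_ (h4 j hj)⟩
    by_cases hji : j = i
    · subst hji; rw [Function.update_self]; exact hle j
    · rw [Function.update_of_ne hji]
  refine le_antisymm ?_ ?_
  · exact csSup_le_csSup ((feasAllocs_finite θ s B π).image _).bddAbove
      (Set.Nonempty.image _ ⟨β, hβmem⟩)
      (Set.image_mono hsub)
  · rw [← hval]; exact le_SWstar θ s hβmem

/-- Degenerate case: if the prior already exhausts the `k` items, the feasible
allocations form a singleton. -/
lemma feasAllocs_singleton_of_full {θ : Profile V k} {s : V} {B : Set V} {π : V → ℕ}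
    (h : SelfAdm θ s B π) (hfull : (∑ j ∈ Finset.univ.erase s, π j) = k) :
    feasAllocs θ s B π = {π} := by
  ext m
  constructor
  · rintro ⟨h1, h2, h3, h4⟩
    have hle : ∀ j ∈ Finset.univ.erase s, π j ≤ m j := fun j hj =>
      h4 j (Finset.mem_erase.1 hj).1
    have hsum : ∑ j ∈ Finset.univ.erase s, m j = ∑ j ∈ Finset.univ.erase s, π j :=
      le_antisymm (hfull ▸ h2) (Finset.sum_le_sum hle)
    have heq := (Finset.sum_eq_sum_iff_of_le hle).1 hsum.symm
    funext j
    by_cases hj : j = s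
    · subst hj; rw [h1, h.1]
    · exact (heq j (Finset.mem_erase.2 ⟨hj, Finset.mem_univ j⟩)).symm
  · rintro rfl; exact h

lemma SWstar_of_full {θ : Profile V k} {s : V} {B : Set V} {π : V → ℕ}
    (h : SelfAdm θ s B π) (hfull : (∑ j ∈ Finset.univ.erase s, π j) = k) :
    SWstar θ s B π = SW θ s π := by
  rw [SWstar, feasAllocs_singleton_of_full h hfull, Set.image_singleton, csSup_singleton]

lemma bestAlloc_of_full {θ : Profile V k} {s : V} {B : Set V} {π : V → ℕ}
    (h : SelfAdm θ s B π) (hfull : (∑ j ∈ Finset.univ.erase s, π j) = k) :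
    bestAlloc θ s B π = π := by
  have := (bestAlloc_spec θ s (B := B) (πhat := π) ⟨π, h⟩).1
  rwa [feasAllocs_singleton_of_full h hfull, Set.mem_singleton_iff] at this

end DA

namespace DA
open scoped Classical
variable {V : Type*} [Fintype V] [DecidableEq V] {k : ℕ}

/-- The set of the first `t` agents in the order `o`. -/
def Sset (o : V ≃ Fin (Fintype.card V)) (t : ℕ) : Set V := {j | (o j : ℕ) < t}

lemma Sset_mono (o : V ≃ Fin (Fintype.card V)) {t t' : ℕ} (h : t ≤ t') :
    Sset o t ⊆ Sset o t' := fun _ hj => lt_of_lt_of_le hj h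

lemma pred_eq_Sset (o : V ≃ Fin (Fintype.card V)) (i : V) :
    pred o i = Sset o (o i : ℕ) := rfl

lemma predeq_eq_Sset (o : V ≃ Fin (Fintype.card V)) (i : V) :
    predeq o i = Sset o ((o i : ℕ) + 1) :=
  Set.ext fun _ => Nat.lt_succ_iff.symm

lemma Sset_univ (o : V ≃ Fin (Fintype.card V)) {t : ℕ} (h : Fintype.card V ≤ t) :
    Sset o t = Set.univ :=
  Set.eq_univ_of_forall fun j => lt_of_lt_of_le (o j).isLt h

lemma not_mem_Sset (o : V ≃ Fin (Fintype.card V)) {t : ℕ} {j : V}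
    (h : t ≤ (o j : ℕ)) : j ∉ Sset o t := fun hj => absurd hj (not_lt.2 h)

lemma pdaStep_invariant (θ : Profile V k) (s : V) (o : V ≃ Fin (Fintype.card V)) :
    ∀ t : ℕ, SelfAdm θ s (Sset o t) (pdaStep θ s o t) ∧
      ∀ j, t ≤ (o j : ℕ) → pdaStep θ s o t j = 0 := by
  intro t
  induction t with
  | zero =>
    exact ⟨⟨rfl, by simp [pdaStep], fun _ _ => rfl, fun _ _ => le_refl _⟩, fun _ _ => rfl⟩
  | succ t IH =>
    obtain ⟨IH1, IH2⟩ := IH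
    rw [pdaStep]
    by_cases ht : t < Fintype.card V
    · rw [dif_pos ht]
      set i := o.symm ⟨t, ht⟩ with hidef
      have hoi : (o i : ℕ) = t := by rw [hidef, o.apply_symm_apply]
      have hpredeq : predeq o i = Sset o (t + 1) := by
        rw [predeq_eq_Sset, hoi]
      by_cases his : i = s
      · rw [if_pos his]
        refine ⟨feasAllocs_mono θ s (Sset_mono o (Nat.le_succ t)) _ IH1,
          fun j hj => IH2 j (le_trans (Nat.le_succ t) hj)⟩
      · rw [if_neg his]
        set π := pdaStep θ s o t with hπdef
        have hSA' : SelfAdm θ s (Sset o (t + 1)) π :=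
          feasAllocs_mono θ s (Sset_mono o (Nat.le_succ t)) _ IH1
        rw [hpredeq]
        set β := bestAlloc θ s (Sset o (t + 1)) π with hβdef
        obtain ⟨hβmem, -⟩ := bestAlloc_spec θ s (B := Sset o (t+1)) (πhat := π) ⟨π, hSA'⟩
        have hle : ∀ j, Function.update π i (β i) j ≤ β j := by
          intro j
          by_cases hji : j = i
          · subst hji; rw [Function.update_self]
          · rw [Function.update_of_ne hji]
            exact prior_le_bestAlloc hSA' j
        constructor
        · refine ⟨?_, ?_, ?_, fun _ _ => le_refl _⟩
          · rw [Function.update_of_ne (Ne.symm his) (f := π)]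
            exact IH1.1
          · exact le_trans (Finset.sum_le_sum fun j _ => hle j) hβmem.2.1
          · intro j hj
            exact Nat.le_zero.1 (le_trans (hle j) (le_of_eq (hβmem.2.2.1 j hj)))
        · intro j hj
          have hji : j ≠ i := by
            intro hji; subst hji
            rw [hoi] at hj; omega
          rw [Function.update_of_ne hji]
          exact IH2 j (le_trans (Nat.le_succ t) hj)
    · rw [dif_neg ht]
      have hSS : Sset o (t + 1) = Sset o t := by
        rw [Sset_univ o (le_of_not_gt ht), Sset_univ o (le_trans (le_of_not_gt ht) (Nat.le_succ t))]
      rw [hSS]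
      exact ⟨IH1, fun j hj => IH2 j (le_trans (Nat.le_succ t) hj)⟩

lemma pdaStep_stable (θ : Profile V k) (s : V) (o : V ≃ Fin (Fintype.card V))
    {t : ℕ} {j : V} (hj : (o j : ℕ) < t) :
    ∀ t', t ≤ t' → pdaStep θ s o t' j = pdaStep θ s o t j := by
  intro t' ht'
  induction t' with
  | zero => omega
  | succ u IH =>
    rcases Nat.lt_or_ge u t with h | h
    · have : t = u + 1 := by omega
      rw [this]
    · rw [pdaStep]
      by_cases hu : u < Fintype.card V
      · rw [dif_pos hu]
        set i := o.symm ⟨u, hu⟩ with hidef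
        have hji : j ≠ i := by
          intro hji; subst hji
          rw [hidef, o.apply_symm_apply] at hj
          simp at hj; omega
        by_cases his : i = s
        · rw [if_pos his]; exact IH (by omega)
        · rw [if_neg his, Function.update_of_ne hji]; exact IH (by omega)
      · rw [dif_neg hu]; exact IH (by omega)

lemma pdaAlloc_eq_step (θ : Profile V k) (s : V) (o : V ≃ Fin (Fintype.card V))
    (j : V) : pdaAlloc θ s o j = pdaStep θ s o ((o j : ℕ) + 1) j :=
  pdaStep_stable θ s o (Nat.lt_succ_self _) _ (o j).isLt

lemma pdaStep_zero_phase {θ : Profile V k} {s : V} (o : V ≃ Fin (Fintype.card V)) :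
    ∀ t : ℕ, t ≤ (o s : ℕ) + 1 → pdaStep θ s o t = fun _ => 0 := by
  intro t
  induction t with
  | zero => intro _; rfl
  | succ t IH =>
    intro ht
    have ht' : t < Fintype.card V := lt_of_le_of_lt (by omega : t ≤ (o s : ℕ)) (o s).isLt
    rw [pdaStep, dif_pos ht']
    set i := o.symm ⟨t, ht'⟩ with hidef
    have hoi : (o i : ℕ) = t := by rw [hidef, o.apply_symm_apply]
    by_cases his : i = s
    · rw [if_pos his]; exact IH (by omega)
    · rw [if_neg his]
      have hts : t ≠ (o s : ℕ) := by
        intro h; apply his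
        have : o i = o s := Fin.ext (by rw [hoi, h])
        exact o.injective this
      have hnots : s ∉ predeq o i := by
        rw [predeq_eq_Sset]
        apply not_mem_Sset
        rw [hoi]; omega
      rw [IH (by omega), bestAlloc_zero_of_not_mem θ hnots]
      funext j
      rw [Function.update_apply]
      split <;> rfl

end DA

namespace DA
open scoped Classical
variable {V : Type*} [Fintype V] [DecidableEq V] {k : ℕ}

lemma SW_update (θ : Profile V k) (s i : V) (his : i ≠ s) (π : V → ℕ) (v : ℕ) :
    SW θ s (Function.update π i v) =
      θ.val i v + ∑ j ∈ (Finset.univ.erase s) \ {i}, θ.val j (π j) := by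
  have hmem : i ∈ Finset.univ.erase s := Finset.mem_erase.2 ⟨his, Finset.mem_univ i⟩
  have : (fun j => θ.val j (Function.update π i v j)) =
      Function.update (fun j => θ.val j (π j)) i (θ.val i v) := by
    funext j
    by_cases hj : j = i
    · subst hj; rw [Function.update_self, Function.update_self]
    · rw [Function.update_of_ne hj, Function.update_of_ne hj]
  rw [SW]
  calc ∑ j ∈ Finset.univ.erase s, θ.val j (Function.update π i v j)
      = ∑ j ∈ Finset.univ.erase s,
          Function.update (fun j => θ.val j (π j)) i (θ.val i v) j := by
        rw [this]
    _ = θ.val i v + ∑ j ∈ (Finset.univ.erase s) \ {i}, θ.val j (π j) :=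
        Finset.sum_update_of_mem hmem _ _

lemma SW_split (θ : Profile V k) (s i : V) (his : i ≠ s) (π : V → ℕ) :
    SW θ s π = θ.val i (π i) + ∑ j ∈ (Finset.univ.erase s) \ {i}, θ.val j (π j) :=
  Finset.sum_eq_add_sum_sdiff_singleton_of_mem (Finset.mem_erase.2 ⟨his, Finset.mem_univ i⟩) _

lemma sum_pay_partial {θ : Profile V k} {s : V} (hθ : θ.Valid s)
    (o : V ≃ Fin (Fintype.card V)) :
    ∀ t : ℕ, t ≤ Fintype.card V →
      ∑ i ∈ (Finset.univ.erase s).filter (fun i => (o i : ℕ) < t), pdaPay θ s o i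
        = (if (o s : ℕ) < t then SWstar θ s (predeq o s) (fun _ => 0) else 0)
          - SWstar θ s (Sset o t) (pdaStep θ s o t) + SW θ s (pdaStep θ s o t) := by
  intro t
  induction t with
  | zero =>
    intro _
    have hfil : (Finset.univ.erase s).filter (fun i => (o i : ℕ) < 0) = ∅ := by
      apply Finset.filter_eq_empty_iff.2
      intro i _; omega
    have hstep0 : pdaStep θ s o 0 = fun _ => 0 := rfl
    rw [hfil, Finset.sum_empty, hstep0, if_neg (by omega),
      SWstar_zero_of_not_mem hθ (not_mem_Sset o (Nat.zero_le _)),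
      SW_eq_zero hθ (fun _ _ => rfl)]
    ring
  | succ t IH =>
    intro htcard
    have ht : t < Fintype.card V := htcard
    have IH' := IH (le_of_lt ht)
    set i := o.symm ⟨t, ht⟩ with hidef
    have hoi : (o i : ℕ) = t := by rw [hidef, o.apply_symm_apply]
    have hmemiff : ∀ j : V, ((o j : ℕ) = t) ↔ j = i := by
      intro j
      constructor
      · intro h
        have : o j = ⟨t, ht⟩ := Fin.ext h
        rw [hidef, Equiv.eq_symm_apply, this]
      · rintro rfl; exact hoi
    obtain ⟨hSA, hz⟩ := pdaStep_invariant θ s o t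
    set π := pdaStep θ s o t with hπdef
    by_cases his : i = s
    · -- seller's turn
      have hstep : pdaStep θ s o (t + 1) = π := by
        rw [pdaStep, dif_pos ht, ← hidef, if_pos his]
      have hfil : (Finset.univ.erase s).filter (fun j => (o j : ℕ) < t + 1)
          = (Finset.univ.erase s).filter (fun j => (o j : ℕ) < t) := by
        apply Finset.filter_congr
        intro j hj
        have hjs : j ≠ s := (Finset.mem_erase.1 hj).1
        have : (o j : ℕ) ≠ t := fun h => hjs (by rw [(hmemiff j).1 h, his])
        omega
      have host : (o s : ℕ) = t := by rw [← his, hoi]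
      have hπ0 : π = fun _ => 0 := pdaStep_zero_phase o t (by omega)
      have hpredeq : predeq o s = Sset o (t + 1) := by
        rw [predeq_eq_Sset, host]
      rw [hfil, IH', hstep]
      rw [if_neg (by omega), if_pos (by omega), hπ0, hpredeq,
        SWstar_zero_of_not_mem hθ (not_mem_Sset o (le_of_eq host.symm)),
        SW_eq_zero hθ (fun _ _ => rfl)]
      ring
    · -- buyer's turn
      have hSA' : SelfAdm θ s (Sset o (t + 1)) π :=
        feasAllocs_mono θ s (Sset_mono o (Nat.le_succ t)) _ hSA
      have hpredeq : predeq o i = Sset o (t + 1) := by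
        rw [predeq_eq_Sset, hoi]
      set β := bestAlloc θ s (Sset o (t + 1)) π with hβdef
      have hstep : pdaStep θ s o (t + 1) = Function.update π i (β i) := by
        rw [pdaStep, dif_pos ht, ← hidef, if_neg his, hpredeq, ← hπdef, ← hβdef]
      have hπi : π i = 0 := hz i (le_of_eq hoi.symm)
      have hprior : pdaPrior θ s o i = π := by rw [pdaPrior, hoi]
      have halloc : pdaAlloc θ s o i = β i := by
        rw [pdaAlloc_eq_step, hoi, hstep, Function.update_self]
      have hpred : pred o i = Sset o t := by rw [pred_eq_Sset, hoi]
      have hif : (if (o s : ℕ) < t + 1 then SWstar θ s (predeq o s) (fun _ => 0) else 0)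
          = (if (o s : ℕ) < t then SWstar θ s (predeq o s) (fun _ => 0) else 0) := by
        have hne : (o s : ℕ) ≠ t := fun h => his ((hmemiff s).1 h).symm
        by_cases hlt : (o s : ℕ) < t
        · rw [if_pos (by omega), if_pos hlt]
        · rw [if_neg (by omega), if_neg hlt]
      have hinotin : i ∉ (Finset.univ.erase s).filter (fun j => (o j : ℕ) < t) := by
        intro hmem
        have := (Finset.mem_filter.1 hmem).2
        omega
      have hfil : (Finset.univ.erase s).filter (fun j => (o j : ℕ) < t + 1)
          = insert i ((Finset.univ.erase s).filter (fun j => (o j : ℕ) < t)) := by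
        ext j
        simp only [Finset.mem_filter, Finset.mem_insert, Finset.mem_erase, Finset.mem_univ,
          true_and, and_true]
        constructor
        · rintro ⟨hjs, hjt⟩
          rcases Nat.lt_succ_iff_lt_or_eq.1 hjt with h | h
          · exact Or.inr ⟨hjs, h⟩
          · exact Or.inl ((hmemiff j).1 h)
        · rintro (rfl | ⟨hjs, hjt⟩)
          · exact ⟨his, by omega⟩
          · exact ⟨hjs, by omega⟩
      rw [hfil, Finset.sum_insert hinotin, IH']
      by_cases hfull : (∑ j ∈ Finset.univ.erase s, π j) = k
      · -- all items already sold
        have hpay : pdaPay θ s o i = 0 := by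
          rw [pdaPay, if_neg his, hprior, if_pos hfull]
        have hβπ : β = π := bestAlloc_of_full hSA' hfull
        have hstep' : pdaStep θ s o (t + 1) = π := by
          rw [hstep, hβπ, Function.update_eq_self]
        rw [hpay, hstep', hif,
          SWstar_of_full hSA' hfull, SWstar_of_full hSA hfull]
        ring
      · have hpay : pdaPay θ s o i = SWstar θ s (Sset o t) π
            - SWstar θ s (Sset o (t + 1)) π + θ.val i (β i) := by
          rw [pdaPay, if_neg his, hprior, if_neg hfull, hpred, hpredeq, halloc]
        have hupd : SWstar θ s (Sset o (t + 1)) (Function.update π i (β i))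
            = SWstar θ s (Sset o (t + 1)) π := SWstar_update θ s hSA' i his
        have hswu : SW θ s (Function.update π i (β i)) = θ.val i (β i) + SW θ s π := by
          rw [SW_update θ s i his, SW_split θ s i his π, hπi, (hθ i his).1]
          ring
        rw [hpay, hstep, hupd, hswu, hif]
        ring

lemma sum_pay {θ : Profile V k} {s : V} (hθ : θ.Valid s)
    (o : V ≃ Fin (Fintype.card V)) :
    ∑ i ∈ Finset.univ.erase s, pdaPay θ s o i
      = SWstar θ s (predeq o s) (fun _ => 0)
        - (SWstar θ s Set.univ (pdaAlloc θ s o) - SW θ s (pdaAlloc θ s o)) := by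
  have h := sum_pay_partial hθ o (Fintype.card V) (le_refl _)
  rw [Finset.filter_true_of_mem (fun j _ => (o j).isLt)] at h
  rw [if_pos (o s).isLt, Sset_univ o (le_refl _)] at h
  rw [h, pdaAlloc]
  ring

end DA

namespace DA
open scoped Classical
variable {V : Type*} [Fintype V] [DecidableEq V]

/-- The finset of buyers preceding `s` in the order `o`. -/
def predFin (s : V) (o : V ≃ Fin (Fintype.card V)) : Finset V :=
  (Finset.univ.erase s).filter (fun j => o j < o s)

lemma coe_insert_predFin (s : V) (o : V ≃ Fin (Fintype.card V)) :
    (↑(insert s (predFin s o)) : Set V) = predeq o s := by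
  ext j
  simp only [Finset.coe_insert, Set.mem_insert_iff, predFin, Finset.coe_filter,
    Finset.mem_erase, Finset.mem_univ, and_true, Set.mem_setOf_eq, predeq]
  constructor
  · rintro (rfl | ⟨-, h⟩)
    · exact le_refl _
    · exact le_of_lt h
  · intro h
    rcases eq_or_lt_of_le h with heq | hlt
    · exact Or.inl (o.injective heq)
    · exact Or.inr ⟨fun hj => absurd (hj ▸ hlt) (lt_irrefl _), hlt⟩

lemma card_pos_V (s : V) : 0 < Fintype.card V := Fintype.card_pos_iff.2 ⟨s⟩

/-- Counting lemma: the number of orders in which exactly the members of `B`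
precede the seller `s`. -/
lemma count_orders (s : V) (B : Finset V) (hB : B ⊆ Finset.univ.erase s) :
    (Finset.univ.filter (fun o : V ≃ Fin (Fintype.card V) => predFin s o = B)).card
      = B.card.factorial * (Fintype.card V - B.card - 1).factorial := by
  classical
  set n := Fintype.card V with hn
  set b := B.card with hb
  set C : Finset V := (Finset.univ.erase s) \ B with hC
  have hsB : s ∉ B := fun h => (Finset.mem_erase.1 (hB h)).1 rfl
  have hcardE : (Finset.univ.erase s).card = n - 1 := by
    rw [Finset.card_erase_of_mem (Finset.mem_univ s), Finset.card_univ]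
  have hbn : b ≤ n - 1 := hcardE ▸ Finset.card_le_card hB
  have hn1 : 1 ≤ n := card_pos_V s
  have hcardC : C.card = n - 1 - b := by
    rw [hC, Finset.card_sdiff_of_subset hB, hcardE]
  set c := n - 1 - b with hc
  have hbcn : b + c + 1 = n := by omega
  have hbltn : b < n := by omega
  -- the condition as a subtype
  have key : Fintype.card {o : V ≃ Fin n // predFin s o = B}
      = Nat.factorial b * Nat.factorial c := by
    have hmemC : ∀ j : V, j ≠ s → j ∉ B → j ∈ C := fun j hjs hjB =>
      Finset.mem_sdiff.2 ⟨Finset.mem_erase.2 ⟨hjs, Finset.mem_univ j⟩, hjB⟩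
    -- forward map
    have hcardB' : Fintype.card {x // x ∈ B} = b := Fintype.card_coe B
    have hcardC' : Fintype.card {x // x ∈ C} = c := by rw [Fintype.card_coe, hcardC]
    let Φf : ({x // x ∈ B} ≃ Fin b) × ({x // x ∈ C} ≃ Fin c) → (V → Fin n) :=
      fun e j =>
        if hj : j ∈ B then ⟨(e.1 ⟨j, hj⟩ : ℕ), by have := (e.1 ⟨j, hj⟩).isLt; omega⟩
        else if hjs : j = s then ⟨b, hbltn⟩
        else ⟨b + 1 + (e.2 ⟨j, hmemC j hjs hj⟩ : ℕ), by
          have := (e.2 ⟨j, hmemC j hjs hj⟩).isLt; omega⟩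
    have Φinj : ∀ e, Function.Injective (Φf e) := by
      intro e x y hxy
      by_cases hx : x ∈ B <;> by_cases hy : y ∈ B
      · simp only [Φf, dif_pos hx, dif_pos hy] at hxy
        have hv := congrArg Fin.val hxy
        simp only [Fin.val_mk] at hv
        exact Subtype.ext_iff.1 (e.1.injective (Fin.ext hv))
      · exfalso
        by_cases hys : y = s
        · simp only [Φf, dif_pos hx, dif_neg hy, dif_pos hys] at hxy
          have := congrArg Fin.val hxy
          have h2 := (e.1 ⟨x, hx⟩).isLt
          simp at this; omega
        · simp only [Φf, dif_pos hx, dif_neg hy, dif_neg hys] at hxy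
          have := congrArg Fin.val hxy
          have h2 := (e.1 ⟨x, hx⟩).isLt
          simp at this; omega
      · exfalso
        by_cases hxs : x = s
        · simp only [Φf, dif_neg hx, dif_pos hxs, dif_pos hy] at hxy
          have := congrArg Fin.val hxy
          have h2 := (e.1 ⟨y, hy⟩).isLt
          simp at this; omega
        · simp only [Φf, dif_neg hx, dif_neg hxs, dif_pos hy] at hxy
          have := congrArg Fin.val hxy
          have h2 := (e.1 ⟨y, hy⟩).isLt
          simp at this; omega
      · by_cases hxs : x = s <;> by_cases hys : y = s
        · rw [hxs, hys]
        · exfalso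
          simp only [Φf, dif_neg hx, dif_neg hy, dif_pos hxs, dif_neg hys] at hxy
          have := congrArg Fin.val hxy
          simp at this; omega
        · exfalso
          simp only [Φf, dif_neg hx, dif_neg hy, dif_neg hxs, dif_pos hys] at hxy
          have := congrArg Fin.val hxy
          simp at this; omega
        · simp only [Φf, dif_neg hx, dif_neg hy, dif_neg hxs, dif_neg hys] at hxy
          have := congrArg Fin.val hxy
          simp only [Fin.val_mk] at this
          have h3 : (e.2 ⟨x, hmemC x hxs hx⟩) = (e.2 ⟨y, hmemC y hys hy⟩) :=
            Fin.ext (by omega)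
          exact Subtype.ext_iff.1 (e.2.injective h3)
    have ΦBij : ∀ e, Function.Bijective (Φf e) := by
      intro e
      rw [Fintype.bijective_iff_injective_and_card]
      exact ⟨Φinj e, by simp [hn]⟩
    let Φ : ({x // x ∈ B} ≃ Fin b) × ({x // x ∈ C} ≃ Fin c) →
        {o : V ≃ Fin n // predFin s o = B} := fun e =>
      ⟨Equiv.ofBijective (Φf e) (ΦBij e), by
        have hfs : Φf e s = ⟨b, hbltn⟩ := by
          simp [Φf, hsB]
        ext j
        simp only [predFin, Finset.mem_filter, Finset.mem_erase, Finset.mem_univ,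
          true_and, and_true]
        constructor
        · rintro ⟨hjs, hlt⟩
          by_contra hjB
          rw [Fin.lt_def] at hlt
          change (Φf e j : ℕ) < (Φf e s : ℕ) at hlt
          rw [hfs] at hlt
          simp only [Φf, dif_neg hjB, dif_neg hjs, Fin.val_mk] at hlt
          omega
        · intro hjB
          have hjs : j ≠ s := fun h => hsB (h ▸ hjB)
          refine ⟨hjs, ?_⟩
          rw [Fin.lt_def]
          change (Φf e j : ℕ) < (Φf e s : ℕ)
          rw [hfs]
          simp only [Φf, dif_pos hjB, Fin.val_mk]
          exact (e.1 ⟨j, hjB⟩).isLt⟩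
    have ΦInj : Function.Injective Φ := by
      intro e f hef
      have hval : ∀ j, Φf e j = Φf f j := by
        intro j
        exact congrArg (fun o : {o : V ≃ Fin n // predFin s o = B} => o.1 j) hef
      rw [Prod.ext_iff]
      constructor
      · apply Equiv.ext; intro x; apply Fin.ext
        have h := hval x.1
        simp only [Φf, dif_pos x.2] at h
        have h2 := congrArg Fin.val h
        simpa using h2
      · apply Equiv.ext; intro x; apply Fin.ext
        have hx := x.2
        simp only [hC, Finset.mem_sdiff, Finset.mem_erase] at hx
        obtain ⟨⟨hxs, -⟩, hxB⟩ := hx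
        have h := hval x.1
        simp only [Φf, dif_neg hxB, dif_neg hxs, Subtype.coe_eta, Fin.mk.injEq] at h
        omega
    have ΦSurj : Function.Surjective Φ := by
      rintro ⟨o, ho⟩
      -- the position of s is b
      have hos : (o s : ℕ) = b := by
        have h1 : (Finset.univ.filter (fun j : V => o j < o s)).card = (o s : ℕ) := by
          have hiio : (Finset.univ.filter (fun m : Fin n => m < o s)) = Finset.Iio (o s) := by
            ext m; simp
          rw [← Fin.card_Iio (o s), ← hiio]
          apply Finset.card_bij (fun j _ => o j)
          · intro a ha
            simp only [Finset.mem_filter, Finset.mem_univ, true_and] at ha ⊢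
            exact ha
          · intro a _ a' _ h; exact o.injective h
          · intro m hm
            refine ⟨o.symm m, ?_, by simp⟩
            simp only [Finset.mem_filter, Finset.mem_univ, true_and,
              Equiv.apply_symm_apply] at hm ⊢
            exact hm
        have h2 : Finset.univ.filter (fun j : V => o j < o s)
            = (Finset.univ.erase s).filter (fun j => o j < o s) := by
          ext j
          constructor
          · intro h
            rw [Finset.mem_filter] at h ⊢
            exact ⟨Finset.mem_erase.2 ⟨fun hj => absurd (hj ▸ h.2) (lt_irrefl _),
              Finset.mem_univ j⟩, h.2⟩
          · intro h
            rw [Finset.mem_filter] at h ⊢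
            exact ⟨Finset.mem_univ j, h.2⟩
        rw [h2] at h1
        rw [← h1]
        rw [predFin] at ho
        rw [ho, hb]
      have hoB : ∀ j (hj : j ∈ B), (o j : ℕ) < b := by
        intro j hj
        have : j ∈ predFin s o := ho ▸ hj
        rw [predFin, Finset.mem_filter] at this
        have := this.2
        rw [Fin.lt_def, hos] at this
        exact this
      have hoC : ∀ j (hj : j ∈ C), b + 1 ≤ (o j : ℕ) ∧ (o j : ℕ) - (b + 1) < c := by
        intro j hj
        simp only [hC, Finset.mem_sdiff, Finset.mem_erase] at hj
        obtain ⟨⟨hjs, -⟩, hjB⟩ := hj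
        have hne : (o j : ℕ) ≠ b := by
          intro h
          apply hjs
          apply o.injective
          exact Fin.ext (by rw [h, ← hos])
        have hnlt : ¬ ((o j : ℕ) < b) := by
          intro h
          apply hjB
          rw [← ho, predFin, Finset.mem_filter]
          exact ⟨Finset.mem_erase.2 ⟨hjs, Finset.mem_univ j⟩, by rw [Fin.lt_def, hos]; exact h⟩
        have := (o j).isLt
        constructor <;> omega
      let e1 : {x // x ∈ B} → Fin b := fun x => ⟨(o x.1 : ℕ), hoB x.1 x.2⟩
      let e2 : {x // x ∈ C} → Fin c := fun x => ⟨(o x.1 : ℕ) - (b + 1), (hoC x.1 x.2).2⟩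
      have he1 : Function.Bijective e1 := by
        rw [Fintype.bijective_iff_injective_and_card]
        constructor
        · intro x y hxy
          apply Subtype.ext
          apply o.injective
          apply Fin.ext
          have h := congrArg Fin.val hxy
          exact h
        · simp [hcardB']
      have he2 : Function.Bijective e2 := by
        rw [Fintype.bijective_iff_injective_and_card]
        constructor
        · intro x y hxy
          have h1 := (hoC x.1 x.2).1
          have h2 := (hoC y.1 y.2).1
          have h3 : (o x.1 : ℕ) - (b + 1) = (o y.1 : ℕ) - (b + 1) :=
            congrArg Fin.val hxy
          exact Subtype.ext (o.injective (Fin.ext (by omega)))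
        · simp [hcardC']
      refine ⟨⟨Equiv.ofBijective e1 he1, Equiv.ofBijective e2 he2⟩, ?_⟩
      apply Subtype.ext
      apply Equiv.ext
      intro j
      show Φf _ j = o j
      by_cases hjB : j ∈ B
      · simp only [Φf, dif_pos hjB]
        exact Fin.ext rfl
      · by_cases hjs : j = s
        · subst hjs
          exact Fin.ext (by simp [Φf, hjB, hos])
        · simp only [Φf, dif_neg hjB, dif_neg hjs]
          have := (hoC j (hmemC j hjs hjB)).1
          exact Fin.ext (by simp only [Fin.val_mk]; change b + 1 + ((o j : ℕ) - (b+1)) = _; omega)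
    have : Fintype.card {o : V ≃ Fin n // predFin s o = B}
        = Fintype.card (({x // x ∈ B} ≃ Fin b) × ({x // x ∈ C} ≃ Fin c)) :=
      (Fintype.card_congr (Equiv.ofBijective Φ ⟨ΦInj, ΦSurj⟩)).symm
    rw [this, Fintype.card_prod,
      Fintype.card_equiv (Fintype.equivFinOfCardEq hcardB'),
      Fintype.card_equiv (Fintype.equivFinOfCardEq hcardC'), hcardB', hcardC']
  rw [← Fintype.card_subtype, key]
  congr 1
  congr 1
  omega

end DA

namespace DA
open scoped Classical
variable {V : Type*} [Fintype V] [DecidableEq V] {k : ℕ}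

lemma perm_sum_eq {θ : Profile V k} {s : V} (hθ : θ.Valid s) :
    ∑ o : V ≃ Fin (Fintype.card V), SWstar θ s (predeq o s) (fun _ => 0)
      = ∑ B ∈ (Finset.univ.erase s).powerset,
          ((B.card.factorial * (Fintype.card V - B.card - 1).factorial : ℕ) : ℝ)
            * SWstar θ s (↑(insert s B)) (fun _ => 0) := by
  rw [← Finset.sum_fiberwise_of_maps_to (g := predFin s)
    (fun o _ => Finset.mem_powerset.2 (Finset.filter_subset _ _))
    (fun o => SWstar θ s (predeq o s) (fun _ => 0))]
  apply Finset.sum_congr rfl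
  intro B hB
  have hBsub : B ⊆ Finset.univ.erase s := Finset.mem_powerset.1 hB
  have : ∀ o ∈ Finset.univ.filter (fun o : V ≃ Fin (Fintype.card V) => predFin s o = B),
      SWstar θ s (predeq o s) (fun _ => 0)
        = SWstar θ s (↑(insert s B)) (fun _ => 0) := by
    intro o ho
    have hpf : predFin s o = B := (Finset.mem_filter.1 ho).2
    rw [← coe_insert_predFin s o, hpf]
  rw [Finset.sum_congr rfl this, Finset.sum_const, nsmul_eq_mul, count_orders s B hBsub]

end DA

end AuxPDA

/-- For any report profile θ', the expected revenue of PDA over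
the uniformly random order equals the seller's Shapley contribution minus the
expected welfare loss from unsold items:
E_PDA(Rev(θ')) = φ_s(θ') − (1/|O(V)|) Σ_o (SW*(θ', V, π^o) − SW(θ', π^o)). -/
theorem pda_expected_revenue {V : Type*} [Fintype V] [DecidableEq V]
    {k : ℕ} (hk : 1 ≤ k) (θ : DA.Profile V k) (s : V) (hθ : θ.Valid s) :
    (∑ o : V ≃ Fin (Fintype.card V),
        ∑ i ∈ Finset.univ.erase s, DA.pdaPay θ s o i) /
      ((Fintype.card V).factorial : ℝ)
    = DA.shapley θ s s
      - (∑ o : V ≃ Fin (Fintype.card V),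
          (DA.SWstar θ s Set.univ (DA.pdaAlloc θ s o)
            - DA.SW θ s (DA.pdaAlloc θ s o))) /
        ((Fintype.card V).factorial : ℝ) := by
  rw [Finset.sum_congr rfl (fun o _ => DA.sum_pay hθ o), Finset.sum_sub_distrib, sub_div]
  congr 1
  rw [DA.perm_sum_eq hθ, DA.shapley, Finset.sum_div]
  apply Finset.sum_congr rfl
  intro B hB
  have hBsub : B ⊆ Finset.univ.erase s := Finset.mem_powerset.1 hB
  have hsB : s ∉ (↑B : Set V) := by
    intro h
    exact (Finset.mem_erase.1 (hBsub h)).1 rfl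
  have hz : DA.SWstar θ s (↑B) (0 : V → ℕ) = 0 := DA.SWstar_zero_of_not_mem hθ hsB
  have hins : DA.SWstar θ s (↑(insert s B)) (0 : V → ℕ)
      = DA.SWstar θ s (↑(insert s B)) (fun _ => 0) := rfl
  rw [hz, hins, sub_zero, Nat.cast_mul]
  ring
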